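/- Fix a prime p, an integer k > 0, and positive integers n_1, ..., n_{k-1}. Choose integers r, t > 0 with p^r > n_1 + ... + n_{k-1} and p^t ≥ k, and set n_k = p^r − (n_1 + ... + n_{k-1}). Let N be the direct product of p^r copies of Z_{p^t}, let P = Z_{p^t} ≀ Z_{p^r} = Z_{p^r} ⋉ N, fix a generator c of Z_{p^t} and α ∈ Lin(Z_{p^t}) with α(c) a primitive p^t-th root of unity, let λ = (α, 1, ..., 1) ∈ Lin(N), and let ψ = λ^P ∈ Irr(P). Let q ∈ N be the element whose first n_1 coordinates are c, whose next n_2 coordinates are c^2, ..., whose next n_{k-1} coordinates are c^{k-1}, and whose remaining n_k coordinates are the identity; let Q = ⟨q⟩, a cyclic subgroup of N of order p^t, and let δ ∈ Lin(Q) with δ(q) = α(c). Then the characters δ, δ^2, ..., δ^{k-1}, 1_Q are pairwise distinct, and the restriction of ψ to Q satisfies ψ_Q = Σ_{i=1}^{k-1} n_i δ^i + n_k · 1_Q; in particular ψ_Q has exactly k distinct irreducible constituents with multiplicities n_1, ..., n_k. -/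

import Mathlib

/-- `χ : G → ℂ` is a (complex) character of `G`: the trace function of some
finite-dimensional complex representation of `G`. -/
def IsChar (G : Type*) [Group G] (χ : G → ℂ) : Prop :=
  ∃ (n : ℕ) (ρ : Representation ℂ G (Fin n → ℂ)),
    ∀ g : G, χ g = LinearMap.trace ℂ (Fin n → ℂ) (ρ g)

/-- The usual inner product of class functions on a finite group. -/
noncomputable def cInner (G : Type*) [Group G] [Finite G] (χ φ : G → ℂ) : ℂ :=
  (Nat.card G : ℂ)⁻¹ * ∑ᶠ g : G, χ g * (starRingEnd ℂ) (φ g)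

/-- `χ` is an irreducible character of the finite group `G`. -/
def IsIrrChar (G : Type*) [Group G] [Finite G] (χ : G → ℂ) : Prop :=
  IsChar G χ ∧ cInner G χ χ = 1

open scoped Classical in
/-- The induced character `χ^G` of a character `χ` of a subgroup `H ≤ G`. -/
noncomputable def inducedChar {G : Type*} [Group G] [Finite G]
    (H : Subgroup G) (χ : ↥H → ℂ) : G → ℂ :=
  fun g => (Nat.card H : ℂ)⁻¹ *
    ∑ᶠ x : G, if h : x⁻¹ * g * x ∈ H then χ ⟨x⁻¹ * g * x, h⟩ else 0

instance {N G : Type*} [Group N] [Group G] [Finite N] [Finite G]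
    {φ : G →* MulAut N} : Finite (N ⋊[φ] G) :=
  Finite.of_injective (fun x : N ⋊[φ] G => (x.left, x.right))
    (fun a b h => by
      cases a; cases b
      simpa [Prod.ext_iff, SemidirectProduct.ext_iff] using h)

/-- The action of the cyclic group `Z_m = Multiplicative (ZMod m)` on the
direct product `ZMod m → A` of `m` copies of `A`, cyclically permuting the
coordinates. -/
def rotAct (m : ℕ) (A : Type*) [CommGroup A] :
    Multiplicative (ZMod m) →* MulAut (ZMod m → A) where
  toFun σ :=
    { toFun := fun f j => f (j - σ.toAdd)
      invFun := fun f j => f (j + σ.toAdd)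
      left_inv := fun f => by funext j; simp
      right_inv := fun f => by funext j; simp
      map_mul' := fun f g => rfl }
  map_one' := by
    apply MulEquiv.ext; intro f; funext j; simp
  map_mul' := fun σ τ => by
    apply MulEquiv.ext; intro f; funext j
    show f (j - (σ * τ).toAdd) = f (j - σ.toAdd - τ.toAdd)
    rw [toAdd_mul, sub_sub]

/-- The base group `N` of the wreath product: the direct product of `p ^ r`
copies of the cyclic group `Z_{p^t}`, indexed by `ZMod (p ^ r)`. -/
abbrev WrBase (p r t : ℕ) : Type := ZMod (p ^ r) → Multiplicative (ZMod (p ^ t))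

/-- The wreath product `Z_{p^t} ≀ Z_{p^r} = Z_{p^r} ⋉ N`, realized as the
semidirect product of `N = WrBase p r t` by `Z_{p^r}` cyclically permuting
the coordinates. -/
abbrev Wreath (p r t : ℕ) : Type :=
  (WrBase p r t) ⋊[rotAct (p ^ r) (Multiplicative (ZMod (p ^ t)))]
    Multiplicative (ZMod (p ^ r))
open scoped Classical in
/-- Given the list `n 0, …, n (k'-1)` of the multiplicities `n_1, …, n_{k-1}`
(so `k' = k - 1`), `blockExp n l` is the exponent of the coordinate in
position `l` (0-indexed) of the element `q`: positions
`n_1 + ⋯ + n_{j-1} ≤ l < n_1 + ⋯ + n_j` get exponent `j` (so the first `n_1`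
coordinates are `c`, the next `n_2` are `c ^ 2`, …), and positions
`l ≥ n_1 + ⋯ + n_{k-1}` get exponent `0` (the identity). -/
noncomputable def blockExp {k' : ℕ} (n : Fin k' → ℕ) (l : ℕ) : ℕ :=
  if l < ∑ i, n i then
    (Finset.univ.filter fun j : Fin k' =>
      (∑ u ∈ Finset.univ.filter fun u : Fin k' => (u : ℕ) < (j : ℕ), n u) ≤ l).card
  else 0

noncomputable def Sfun {k' : ℕ} (n : Fin k' → ℕ) (i : ℕ) : ℕ :=
  ∑ u ∈ Finset.univ.filter (fun u : Fin k' => (u : ℕ) < i), n u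

open Classical Finset in
lemma Sfun_mono {k' : ℕ} (n : Fin k' → ℕ) {i j : ℕ} (h : i ≤ j) :
    Sfun n i ≤ Sfun n j := by
  apply Finset.sum_le_sum_of_subset
  intro u hu
  simp only [mem_filter, mem_univ, true_and] at hu ⊢
  omega

lemma Sfun_zero {k' : ℕ} (n : Fin k' → ℕ) : Sfun n 0 = 0 := by
  simp [Sfun]

open Finset in
lemma Sfun_succ {k' : ℕ} (n : Fin k' → ℕ) {i : ℕ} (h : i < k') :
    Sfun n (i + 1) = Sfun n i + n ⟨i, h⟩ := by
  classical
  have : (univ.filter (fun u : Fin k' => (u : ℕ) < i + 1)) =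
      insert ⟨i, h⟩ (univ.filter (fun u : Fin k' => (u : ℕ) < i)) := by
    ext u
    simp only [mem_filter, mem_univ, true_and, mem_insert, Fin.ext_iff]
    omega
  rw [Sfun, this, Finset.sum_insert (by simp), Sfun, add_comm]

open Finset in
lemma Sfun_top {k' : ℕ} (n : Fin k' → ℕ) {j : ℕ} (h : k' ≤ j) :
    Sfun n j = ∑ i, n i := by
  rw [Sfun]
  congr 1
  ext u
  simp only [mem_filter, mem_univ, true_and, iff_true]
  omega

open Finset in
lemma card_filter_lt {k' : ℕ} {c : ℕ} (h : c ≤ k') :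
    (univ.filter fun j : Fin k' => (j : ℕ) < c).card = c := by
  classical
  have himg : (univ.filter fun j : Fin k' => (j : ℕ) < c).image Fin.val =
      Finset.range c := by
    ext l
    simp only [mem_image, mem_filter, mem_univ, true_and, mem_range]
    constructor
    · rintro ⟨a, ha, rfl⟩; exact ha
    · intro hl; exact ⟨⟨l, lt_of_lt_of_le hl h⟩, hl, rfl⟩
  calc (univ.filter fun j : Fin k' => (j : ℕ) < c).card
      = ((univ.filter fun j : Fin k' => (j : ℕ) < c).image Fin.val).card :=
        (Finset.card_image_of_injective _ Fin.val_injective).symm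
    _ = (Finset.range c).card := by rw [himg]
    _ = c := Finset.card_range c

open Finset in
lemma blockExp_eq {k' : ℕ} (n : Fin k' → ℕ) {i l : ℕ} (hi : i < k')
    (h1 : Sfun n i ≤ l) (h2 : l < Sfun n (i + 1)) : blockExp n l = i + 1 := by
  classical
  have hlt : l < ∑ u, n u := lt_of_lt_of_le h2 (by rw [← Sfun_top n (le_refl k')]; exact Sfun_mono n hi)
  rw [blockExp, if_pos hlt]
  have : (Finset.univ.filter fun j : Fin k' =>
      (∑ u ∈ Finset.univ.filter fun u : Fin k' => (u : ℕ) < (j : ℕ), n u) ≤ l) =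
      Finset.univ.filter fun j : Fin k' => (j : ℕ) < i + 1 := by
    ext j
    simp only [mem_filter, mem_univ, true_and]
    show Sfun n j ≤ l ↔ _
    constructor
    · intro hj
      by_contra hc
      push_neg at hc
      exact absurd (le_trans (Sfun_mono n hc) hj) (not_le_of_gt h2)
    · intro hj
      exact le_trans (Sfun_mono n (Nat.lt_succ_iff.mp hj)) h1
  rw [this, card_filter_lt hi]

lemma blockExp_ge {k' : ℕ} (n : Fin k' → ℕ) {l : ℕ} (h : ∑ i, n i ≤ l) :
    blockExp n l = 0 := by
  rw [blockExp, if_neg (not_lt.mpr h)]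

open Finset in
lemma sum_blockExp_aux {k' : ℕ} (n : Fin k' → ℕ) (F : ℕ → ℂ) :
    ∀ j ≤ k', ∑ l ∈ Finset.range (Sfun n j), F (blockExp n l) =
      ∑ i ∈ univ.filter (fun i : Fin k' => (i : ℕ) < j), (n i : ℂ) * F ((i : ℕ) + 1) := by
  intro j
  induction j with
  | zero => intro _; simp [Sfun_zero]
  | succ j ih =>
    intro hj
    have hjk : j < k' := hj
    have hle := Sfun_mono n (Nat.le_succ j)
    rw [Finset.range_eq_Ico, ← Finset.sum_Ico_consecutive _ (Nat.zero_le _) hle,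
      ← Finset.range_eq_Ico, ih (le_of_lt hjk)]
    have hconst : ∑ l ∈ Finset.Ico (Sfun n j) (Sfun n (j + 1)), F (blockExp n l) =
        (n ⟨j, hjk⟩ : ℂ) * F (j + 1) := by
      have hc : ∀ l ∈ Finset.Ico (Sfun n j) (Sfun n (j + 1)),
          F (blockExp n l) = F (j + 1) := fun l hl => by
        rw [Finset.mem_Ico] at hl
        rw [blockExp_eq n hjk hl.1 hl.2]
      rw [Finset.sum_congr rfl hc, Finset.sum_const, Nat.card_Ico, Sfun_succ n hjk,
        nsmul_eq_mul]
      simp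
    rw [hconst]
    have : (univ.filter (fun i : Fin k' => (i : ℕ) < j + 1)) =
        insert ⟨j, hjk⟩ (univ.filter (fun i : Fin k' => (i : ℕ) < j)) := by
      ext u
      simp only [mem_filter, mem_univ, true_and, mem_insert, Fin.ext_iff]
      omega
    rw [this, Finset.sum_insert (by simp)]
    ring

open Finset in
lemma sum_blockExp {k' : ℕ} (n : Fin k' → ℕ) (F : ℕ → ℂ) {M : ℕ} (hM : ∑ i, n i ≤ M) :
    ∑ l ∈ Finset.range M, F (blockExp n l) =
      (∑ i : Fin k', (n i : ℂ) * F ((i : ℕ) + 1)) + ((M - ∑ i, n i : ℕ) : ℂ) * F 0 := by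
  classical
  rw [Finset.range_eq_Ico, ← Finset.sum_Ico_consecutive _ (Nat.zero_le _) hM,
    ← Finset.range_eq_Ico]
  have h1 : ∑ l ∈ Finset.range (∑ i, n i), F (blockExp n l) = ∑ i : Fin k', (n i : ℂ) * F ((i : ℕ) + 1) := by
    rw [← Sfun_top n (le_refl k'), sum_blockExp_aux n F k' (le_refl k')]
    congr 1
    ext u
    simp [Fin.is_lt]
  have h2 : ∑ l ∈ Finset.Ico (∑ i, n i) M, F (blockExp n l) = ((M - ∑ i, n i : ℕ) : ℂ) * F 0 := by
    have hc : ∀ l ∈ Finset.Ico (∑ i, n i) M, F (blockExp n l) = F 0 := fun l hl => by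
      rw [Finset.mem_Ico] at hl
      rw [blockExp_ge n hl.1]
    rw [Finset.sum_congr rfl hc, Finset.sum_const, Nat.card_Ico, nsmul_eq_mul]
  rw [h1, h2]
open SemidirectProduct in
lemma conj_inl (p r t : ℕ) (x : Wreath p r t) (f : WrBase p r t) :
    x⁻¹ * inl f * x =
      inl (rotAct (p ^ r) (Multiplicative (ZMod (p ^ t))) x.right⁻¹ f) := by
  rw [SemidirectProduct.ext_iff]
  constructor
  · simp [mul_assoc, mul_comm, mul_left_comm]
  · simp

open SemidirectProduct in
lemma psi_inl (p r t : ℕ) [NeZero (p ^ r)] [NeZero (p ^ t)]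
    (α : Multiplicative (ZMod (p ^ t)) →* ℂ)
    (lam : WrBase p r t →* ℂ) (hlam : ∀ f, lam f = α (f 0))
    (f : WrBase p r t) :
    inducedChar (inl : WrBase p r t →* Wreath p r t).range
      (fun x => lam (x : Wreath p r t).left) (inl f) =
      ∑ j : ZMod (p ^ r), α (f j) := by
  classical
  haveI : Fintype (Wreath p r t) := Fintype.ofFinite _
  rw [inducedChar, finsum_eq_sum_of_fintype]
  have hterm : ∀ x : Wreath p r t,
      (if h : x⁻¹ * inl f * x ∈ (inl : WrBase p r t →* Wreath p r t).range
        then lam (((⟨x⁻¹ * inl f * x, h⟩ : ↥(inl : WrBase p r t →* Wreath p r t).range) :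
          Wreath p r t).left) else 0) = α (f x.right.toAdd) := by
    intro x
    have hmem : x⁻¹ * inl f * x ∈ (inl : WrBase p r t →* Wreath p r t).range := by
      rw [conj_inl]; exact ⟨_, rfl⟩
    rw [dif_pos hmem]
    show lam (x⁻¹ * inl f * x).left = _
    rw [conj_inl, SemidirectProduct.left_inl, hlam]
    show α (f (0 - x.right⁻¹.toAdd)) = _
    rw [toAdd_inv, sub_neg_eq_add, zero_add]
  simp only [hterm]
  rw [Fintype.sum_equiv
      (⟨fun x => (x.left, x.right), fun y => ⟨y.1, y.2⟩,
        fun x => by cases x; rfl, fun y => rfl⟩ :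
        Wreath p r t ≃ WrBase p r t × Multiplicative (ZMod (p ^ r)))
      (fun x : Wreath p r t => α (f x.right.toAdd))
      (fun y => α (f y.2.toAdd)) (fun x => rfl),
    Fintype.sum_prod_type]
  have h2 : ∀ x : WrBase p r t,
      (∑ y : Multiplicative (ZMod (p ^ r)), α (f (Multiplicative.toAdd (x, y).2))) =
        ∑ j : ZMod (p ^ r), α (f j) := fun x =>
    Fintype.sum_equiv (Multiplicative.toAdd) _ _ (fun σ => rfl)
  simp only [h2]
  rw [Finset.sum_const]
  have hcard : Nat.card ↥(inl : WrBase p r t →* Wreath p r t).range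
      = Fintype.card (WrBase p r t) := by
    rw [← Nat.card_eq_fintype_card]
    exact (Nat.card_congr (MonoidHom.ofInjective inl_injective).toEquiv).symm
  rw [hcard, nsmul_eq_mul, ← mul_assoc, Finset.card_univ,
    inv_mul_cancel₀ (by exact_mod_cast (Fintype.card_ne_zero : Fintype.card (WrBase p r t) ≠ 0)),
    one_mul]
  exact Fintype.sum_equiv Multiplicative.toAdd _ _ (fun σ => rfl)

/-- Fix a prime `p`, `k > 0` and positive integers `n_1, …, n_{k-1}` (here
`n : Fin (k-1) → ℕ`), and `r, t > 0` with `p ^ r > n_1 + ⋯ + n_{k-1}` and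
`p ^ t ≥ k`; let `m : Fin k → ℕ` be the full list of multiplicities, with
last entry `n_k = p ^ r - (n_1 + ⋯ + n_{k-1})`.  With
`P = Z_{p^t} ≀ Z_{p^r}`, `lam = (α, 1, …, 1)` and `ψ = lam ^ P` as before, let
`q ∈ N` have its first `n_1` coordinates equal to `c`, the next `n_2` equal
to `c ^ 2`, …, the next `n_{k-1}` equal to `c ^ (k-1)` and the remaining
`n_k` coordinates equal to `1`; let `Q = ⟨q⟩` and let `δ ∈ Lin(Q)` with
`δ q = α c`.  Then `Q` is cyclic of order `p ^ t`, the characters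
`δ, δ², …, δ^(k-1), 1_Q` are pairwise distinct, and
`ψ_Q = ∑_{i=1}^{k-1} n_i δ^i + n_k 1_Q`, with `(ψ_Q, δ^i) = n_i`; in
particular `ψ_Q` has exactly `k` distinct irreducible constituents with
multiplicities `n_1, …, n_k`. -/
theorem wreath_restriction_to_cyclic_subgroup
    (p : ℕ) (hp : p.Prime) (k : ℕ) (hk : 0 < k)
    (n : Fin (k - 1) → ℕ) (hn : ∀ i, 0 < n i)
    (r t : ℕ) (hr : 0 < r) (ht : 0 < t)
    [NeZero (p ^ r)] [NeZero (p ^ t)]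
    (hrn : ∑ i, n i < p ^ r) (htk : k ≤ p ^ t)
    (m : Fin k → ℕ)
    (hm : ∀ (i : Fin k) (h : (i : ℕ) < k - 1), m i = n ⟨i, h⟩)
    (hmk : m ⟨k - 1, Nat.sub_lt hk Nat.one_pos⟩ = p ^ r - ∑ i, n i)
    (c : Multiplicative (ZMod (p ^ t))) (hc : ∀ x, x ∈ Subgroup.zpowers c)
    (α : Multiplicative (ZMod (p ^ t)) →* ℂ)
    (hα : IsPrimitiveRoot (α c) (p ^ t))
    (lam : WrBase p r t →* ℂ) (hlam : ∀ f : WrBase p r t, lam f = α (f 0))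
    (Nsub : Subgroup (Wreath p r t))
    (hN : Nsub = (SemidirectProduct.inl :
      WrBase p r t →* Wreath p r t).range)
    (ψ : Wreath p r t → ℂ)
    (hψ : ψ = inducedChar Nsub (fun x : ↥Nsub => lam (x : Wreath p r t).left))
    (q : WrBase p r t) (hq : q = fun j : ZMod (p ^ r) => c ^ blockExp n j.val)
    (Q : Subgroup (Wreath p r t))
    (hQ : Q = Subgroup.zpowers (SemidirectProduct.inl q))
    (δ : ↥Q →* ℂ)
    (hδ : δ ⟨SemidirectProduct.inl q, by
        subst hQ; exact Subgroup.mem_zpowers _⟩ = α c) :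
    -- `Q = ⟨q⟩` is cyclic of order `p ^ t`
    Nat.card ↥Q = p ^ t ∧
    -- `δ, δ², …, δ^(k-1), 1_Q` are pairwise distinct
    Function.Injective (fun i : Fin k =>
      (fun x : ↥Q => δ x ^ (if (i : ℕ) < k - 1 then (i : ℕ) + 1 else 0))) ∧
    -- `ψ_Q = ∑_{i=1}^{k-1} n_i δ^i + n_k 1_Q`
    (∀ x : ↥Q, ψ (x : Wreath p r t) =
      ∑ i : Fin k, (m i : ℂ) *
        δ x ^ (if (i : ℕ) < k - 1 then (i : ℕ) + 1 else 0)) ∧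
    -- multiplicities: `(ψ_Q, δ^i) = n_i`
    (∀ i : Fin k,
      cInner ↥Q (fun x : ↥Q => ψ (x : Wreath p r t))
        (fun x : ↥Q => δ x ^ (if (i : ℕ) < k - 1 then (i : ℕ) + 1 else 0))
        = (m i : ℂ)) := by
  classical
  subst hN hψ hQ
  obtain ⟨k', rfl⟩ : ∃ k', k = k' + 1 := ⟨k - 1, (Nat.succ_pred_eq_of_pos hk).symm⟩
  simp only [Nat.add_sub_cancel] at *
  set ω : ℂ := α c with hω
  -- basic facts about ω
  have hωpow : ω ^ (p ^ t) = 1 := hα.pow_eq_one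
  have hpt0 : (p ^ t : ℕ) ≠ 0 := NeZero.ne _
  have hων : ‖ω‖ = 1 := Complex.norm_eq_one_of_pow_eq_one hωpow hpt0
  have hω0 : ω ≠ 0 := fun h => by simp [h] at hων
  have hconj : ∀ a : ℕ, (starRingEnd ℂ) (ω ^ a) = (ω ^ a)⁻¹ := by
    intro a
    apply eq_inv_of_mul_eq_one_right
    have h2 : Complex.normSq (ω ^ a) = 1 := by
      rw [Complex.normSq_eq_norm_sq, norm_pow, hων, one_pow, one_pow]
    rw [Complex.mul_conj, h2, Complex.ofReal_one]
  have hzpow : ∀ a : ℕ, (ω ^ a) ^ (p ^ t) = 1 := fun a => by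
    rw [← pow_mul, mul_comm, pow_mul, hωpow, one_pow]
  -- every element of Multiplicative (ZMod (p ^ t)) has order dividing p ^ t
  have hx1 : ∀ x : Multiplicative (ZMod (p ^ t)), x ^ (p ^ t) = 1 := fun x => by
    rw [← ofAdd_toAdd x, ← ofAdd_nsmul]
    rw [nsmul_eq_mul, ZMod.natCast_self, zero_mul]
    rfl
  have hq1 : q ^ (p ^ t) = 1 := by
    funext j
    rw [Pi.pow_apply, hx1, Pi.one_apply]
  -- the generator of Q
  have hg0mem : SemidirectProduct.inl q ∈
      Subgroup.zpowers (SemidirectProduct.inl q : Wreath p r t) := Subgroup.mem_zpowers _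
  set g0 : ↥(Subgroup.zpowers (SemidirectProduct.inl q : Wreath p r t)) :=
    ⟨SemidirectProduct.inl q, hg0mem⟩ with hg0
  have hδ0 : δ g0 = ω := hδ
  -- the order of inl q is p ^ t
  have hord : orderOf (SemidirectProduct.inl q : Wreath p r t) = p ^ t := by
    apply Nat.dvd_antisymm
    · apply orderOf_dvd_of_pow_eq_one
      rw [← map_pow, hq1, map_one]
    · apply hα.dvd_of_pow_eq_one
      show ω ^ _ = 1
      rw [← hδ0, ← map_pow, ← Subgroup.orderOf_mk (SemidirectProduct.inl q : Wreath p r t) hg0mem,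
        pow_orderOf_eq_one, map_one]
  have hcardQ :
      Nat.card ↥(Subgroup.zpowers (SemidirectProduct.inl q : Wreath p r t)) = p ^ t := by
    rw [Nat.card_zpowers, hord]
  -- the exponents are small and injective
  have hElt : ∀ i : Fin (k' + 1), (if (i : ℕ) < k' then (i : ℕ) + 1 else 0) < p ^ t := by
    intro i
    have := i.is_lt
    split_ifs <;> omega
  have hEinj : ∀ i i' : Fin (k' + 1),
      (if (i : ℕ) < k' then (i : ℕ) + 1 else 0) = (if (i' : ℕ) < k' then (i' : ℕ) + 1 else 0) →
        i = i' := by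
    intro i i' h
    have h1 := i.is_lt
    have h2 := i'.is_lt
    apply Fin.ext
    split_ifs at h <;> omega
  -- δ on powers of the generator
  have hδpow : ∀ s : ℕ, δ (g0 ^ s) = ω ^ s := fun s => by rw [map_pow, hδ0]
  -- the key computation of ψ on powers of inl q
  have key : ∀ s : ℕ,
      inducedChar (SemidirectProduct.inl : WrBase p r t →* Wreath p r t).range
        (fun x => lam (x : Wreath p r t).left)
        ((SemidirectProduct.inl q : Wreath p r t) ^ s) =
      ∑ i : Fin (k' + 1), (m i : ℂ) *
        ω ^ (s * (if (i : ℕ) < k' then (i : ℕ) + 1 else 0)) := by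
    intro s
    rw [← map_pow, psi_inl p r t α lam hlam]
    have hterm : ∀ j : ZMod (p ^ r),
        α ((q ^ s) j) = (fun a => ω ^ (s * a)) (blockExp n j.val) := by
      intro j
      rw [Pi.pow_apply, hq]
      show α ((c ^ blockExp n j.val) ^ s) = _
      rw [← pow_mul, map_pow, mul_comm]
    rw [Finset.sum_congr rfl (fun j _ => hterm j)]
    have hbij : ∑ j : ZMod (p ^ r), (fun a => ω ^ (s * a)) (blockExp n j.val) =
        ∑ l ∈ Finset.range (p ^ r), (fun a => ω ^ (s * a)) (blockExp n l) := by
      apply Finset.sum_nbij' (fun j : ZMod (p ^ r) => j.val)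
          (fun l : ℕ => (l : ZMod (p ^ r)))
      · intro a _; exact Finset.mem_range.mpr (ZMod.val_lt a)
      · intro a _; exact Finset.mem_univ _
      · intro a _; exact ZMod.natCast_rightInverse a
      · intro a ha; exact ZMod.val_cast_of_lt (Finset.mem_range.mp ha)
      · intro a _; rfl
    rw [hbij, sum_blockExp n (fun a => ω ^ (s * a)) (le_of_lt hrn), Fin.sum_univ_castSucc]
    have hmk' : m (Fin.last k') = p ^ r - ∑ i, n i := hmk
    congr 1
    · apply Finset.sum_congr rfl
      intro i _
      have hi : ((i.castSucc : Fin (k' + 1)) : ℕ) < k' := i.is_lt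
      rw [if_pos hi, hm i.castSucc hi]
      rfl
    · have hlast : ¬ ((Fin.last k' : ℕ) < k') := by simp
      rw [if_neg hlast, mul_zero, pow_zero, hmk', mul_one]
  -- every element of Q is a power of the generator
  have hpow : ∀ x : ↥(Subgroup.zpowers (SemidirectProduct.inl q : Wreath p r t)),
      ∃ s : ℕ, g0 ^ s = x := by
    intro x
    obtain ⟨s, hs⟩ := mem_powers_iff_mem_zpowers.mpr x.2
    exact ⟨s, Subtype.ext (by rw [SubmonoidClass.coe_pow]; exact hs)⟩
  refine ⟨hcardQ, ?_, ?_, ?_⟩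
  · -- injectivity
    intro i i' h
    have h0 := congrFun h g0
    simp only [hδ0] at h0
    exact hEinj i i' (hα.pow_inj (hElt i) (hElt i') h0)
  · -- restriction formula
    intro x
    obtain ⟨s, rfl⟩ := hpow x
    have hcoe : ((g0 ^ s :
        ↥(Subgroup.zpowers (SemidirectProduct.inl q : Wreath p r t))) : Wreath p r t) =
        (SemidirectProduct.inl q : Wreath p r t) ^ s := by
      rw [SubmonoidClass.coe_pow]
    rw [hcoe, key s]
    apply Finset.sum_congr rfl
    intro i _
    rw [hδpow, ← pow_mul]
  · -- inner products
    intro i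
    haveI : Fintype ↥(Subgroup.zpowers (SemidirectProduct.inl q : Wreath p r t)) :=
      Fintype.ofFinite _
    rw [cInner, finsum_eq_sum_of_fintype, hcardQ]
    set Ei : ℕ := if (i : ℕ) < k' then (i : ℕ) + 1 else 0 with hEi
    -- reindex the sum over Q by Fin (orderOf (inl q))
    have h1 : (∑ x : ↥(Subgroup.zpowers (SemidirectProduct.inl q : Wreath p r t)),
        inducedChar (SemidirectProduct.inl : WrBase p r t →* Wreath p r t).range
          (fun y => lam (y : Wreath p r t).left) (x : Wreath p r t) *
          (starRingEnd ℂ) (δ x ^ Ei)) =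
        ∑ s ∈ Finset.range (orderOf (SemidirectProduct.inl q : Wreath p r t)),
          ((∑ j : Fin (k' + 1), (m j : ℂ) *
            ω ^ (s * (if (j : ℕ) < k' then (j : ℕ) + 1 else 0))) *
            (starRingEnd ℂ) (ω ^ (s * Ei))) := by
      rw [← Fin.sum_univ_eq_sum_range]
      refine (Fintype.sum_equiv
        (finEquivZPowers (x := (SemidirectProduct.inl q : Wreath p r t))
          (isOfFinOrder_of_finite _)) _ _ ?_).symm
      intro s
      have hEs : (finEquivZPowers (x := (SemidirectProduct.inl q : Wreath p r t))
          (isOfFinOrder_of_finite _)) s = g0 ^ (s : ℕ) :=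
        Subtype.ext rfl
      rw [hEs, hδpow, ← pow_mul, SubmonoidClass.coe_pow, key (s : ℕ)]
    rw [h1, hord]
    have hps : ∀ (a u : ℕ), ω ^ (u * a) = (ω ^ a) ^ u := fun a u => by
      rw [mul_comm, pow_mul]
    have h3 : ∀ s ∈ Finset.range (p ^ t),
        ((∑ j : Fin (k' + 1), (m j : ℂ) *
          ω ^ (s * (if (j : ℕ) < k' then (j : ℕ) + 1 else 0))) *
          (starRingEnd ℂ) (ω ^ (s * Ei))) =
        ∑ j : Fin (k' + 1), (m j : ℂ) *
          (ω ^ (if (j : ℕ) < k' then (j : ℕ) + 1 else 0) * (ω ^ Ei)⁻¹) ^ s := by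
      intro s _
      rw [hconj, Finset.sum_mul]
      apply Finset.sum_congr rfl
      intro j _
      rw [mul_assoc]
      congr 1
      rw [hps, hps, ← inv_pow, ← mul_pow]
    rw [Finset.sum_congr rfl h3, Finset.sum_comm]
    have h5 : ∀ j : Fin (k' + 1),
        (∑ s ∈ Finset.range (p ^ t), (m j : ℂ) *
          (ω ^ (if (j : ℕ) < k' then (j : ℕ) + 1 else 0) * (ω ^ Ei)⁻¹) ^ s) =
        if j = i then (m j : ℂ) * (p ^ t : ℕ) else 0 := by
      intro j
      rw [← Finset.mul_sum]
      by_cases hji : j = i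
      · subst hji
        rw [if_pos rfl]
        rw [show (if (j : ℕ) < k' then (j : ℕ) + 1 else 0) = Ei from rfl,
          mul_inv_cancel₀ (pow_ne_zero _ hω0)]
        simp
      · have hz1 : ω ^ (if (j : ℕ) < k' then (j : ℕ) + 1 else 0) * (ω ^ Ei)⁻¹ ≠ 1 := by
          intro hcon
          rw [mul_inv_eq_one₀ (pow_ne_zero _ hω0)] at hcon
          exact hji (hEinj _ _ (hα.pow_inj (hElt j) (hElt i) hcon))
        have hzp : (ω ^ (if (j : ℕ) < k' then (j : ℕ) + 1 else 0) * (ω ^ Ei)⁻¹) ^ (p ^ t)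
            = 1 := by
          rw [mul_pow, inv_pow, hzpow, hzpow, inv_one, mul_one]
        rw [if_neg hji, geom_sum_eq hz1, hzp, sub_self, zero_div, mul_zero]
    rw [Finset.sum_congr rfl (fun j _ => h5 j), Finset.sum_ite_eq' Finset.univ i
      (fun j => (m j : ℂ) * (p ^ t : ℕ))]
    rw [if_pos (Finset.mem_univ i), mul_comm ((m i : ℂ)) _, ← mul_assoc,
      inv_mul_cancel₀ (by exact_mod_cast hpt0), one_mul]
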